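/- Let A_n be the autonomous operator sequence defined by A_1 = a_0 and A_{n+1} = Y_n(A_1,...,A_n; a_1,...,a_n). If a_n = n! for all n ≥ 0, then A_n = (-1)^{n+1} 2^n \binom{1/2}{n} n! for all n ≥ 1, where \binom{1/2}{n} is the generalized binomial coefficient. -/

import Mathlib

open Finset

/-- Partial Bell polynomials `B_{n,k}(b₁,…)`, via the standard recurrence
`B_{n+1,k+1} = ∑_{i=0}^{n} C(n,i) b_{i+1} B_{n-i,k}`. -/
noncomputable def partialBell {R : Type*} [Ring R] : ℕ → ℕ → (ℕ → R) → R
  | 0, 0, _ => 1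
  | _ + 1, 0, _ => 0
  | 0, _ + 1, _ => 0
  | n + 1, k + 1, b =>
      ∑ i ∈ Finset.range (n + 1), (n.choose i : R) * b (i + 1) * partialBell (n - i) k b
  termination_by n k _ => k

/-- The `n`-th (complete) Bell polynomial `Y_n(b₁,…,b_n; a₁,…,a_n) = ∑_{k=1}^n B_{n,k} a_k`. -/
noncomputable def bellY {R : Type*} [Ring R] (n : ℕ) (b a : ℕ → R) : R :=
  ∑ k ∈ Finset.Icc 1 n, partialBell n k b * a k

/-- The autonomous operator: `A₁ = a₀`, `A_{n+1} = Y_n(A₁,…,A_n; a₁,…,a_n)`. -/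
noncomputable def autoA {R : Type*} [Ring R] (a : ℕ → R) : ℕ → R
  | 0 => 0
  | 1 => a 0
  | n + 2 => bellY (n + 1) (fun k => if h : k < n + 2 then autoA a k else 0) a
  termination_by n => n

/-- Generalized binomial coefficient `x(x-1)⋯(x-n+1)/n!`. -/
noncomputable def genChoose (x : ℝ) (n : ℕ) : ℝ :=
  (∏ k ∈ Finset.range n, (x - k)) / n.factorial

/-- Rising factorial (Pochhammer symbol) `(x)ₙ = x(x+1)⋯(x+n-1)`. -/
noncomputable def risingFac (x : ℝ) (n : ℕ) : ℝ :=
  ∏ k ∈ Finset.range n, (x + k)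

/- ### Auxiliary development -/

section Aux

open PowerSeries

/-- `partialBell n k` only depends on `b 1, …, b n`. -/
lemma partialBell_congr (n : ℕ) : ∀ (k : ℕ) (b b' : ℕ → ℝ),
    (∀ j, 1 ≤ j → j ≤ n → b j = b' j) → partialBell n k b = partialBell n k b' := by
  induction n using Nat.strong_induction_on with
  | _ n ih =>
    intro k b b' hbb
    match n, k with
    | 0, 0 => simp [partialBell]
    | 0, k + 1 => simp [partialBell]
    | n + 1, 0 => simp [partialBell]
    | n + 1, k + 1 =>
      rw [partialBell, partialBell]
      refine Finset.sum_congr rfl fun i hi => ?_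
      rw [Finset.mem_range] at hi
      rw [hbb (i + 1) (Nat.le_add_left 1 i) (by omega),
        ih (n - i) (by omega) k b b' fun j h1 h2 => hbb j h1 (by omega)]

/-- The double factorial sequence `d n = (2n-3)!!`, i.e. `d 1 = 1`, `d (n+2) = (2n+1) d (n+1)`. -/
noncomputable def dseq : ℕ → ℝ
  | 0 => 0
  | 1 => 1
  | n + 2 => (2 * n + 1) * dseq (n + 1)

lemma dseq_succ (n : ℕ) (hn : 1 ≤ n) : dseq (n + 1) = (2 * n - 1) * dseq n := by
  obtain ⟨m, rfl⟩ := Nat.exists_eq_add_of_le' hn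
  show dseq (m + 2) = _
  rw [dseq]
  push_cast
  ring_nf

/-- The exponential generating function of a sequence `b` (dropping the constant term). -/
noncomputable def egf (b : ℕ → ℝ) : PowerSeries ℝ :=
  PowerSeries.mk fun n => if n = 0 then 0 else b n / n.factorial

lemma coeff_egf (b : ℕ → ℝ) (n : ℕ) :
    PowerSeries.coeff (R := ℝ) n (egf b) = if n = 0 then 0 else b n / n.factorial := by
  simp [egf]

/-- Key EGF identity: `coeff n ((egf b)^k) * n! = k! * B(n,k)(b)`. -/
lemma coeff_egf_pow (b : ℕ → ℝ) : ∀ (n k : ℕ),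
    PowerSeries.coeff (R := ℝ) n ((egf b) ^ k) * n.factorial = k.factorial * partialBell n k b := by
  intro n
  induction n using Nat.strong_induction_on with
  | _ n ih =>
    intro k
    match n, k with
    | 0, 0 => simp [partialBell]
    | 0, k + 1 =>
      have h0 : PowerSeries.constantCoeff (R := ℝ) (egf b) = 0 := by
        rw [← PowerSeries.coeff_zero_eq_constantCoeff_apply]
        simpa using coeff_egf b 0
      rw [PowerSeries.coeff_zero_eq_constantCoeff_apply, map_pow, h0]
      simp [partialBell]
    | n + 1, 0 =>
      simp [partialBell, PowerSeries.coeff_one]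
    | n + 1, k + 1 =>
      have hder : PowerSeries.coeff (R := ℝ) (n + 1) ((egf b) ^ (k + 1)) * (n + 1) =
          PowerSeries.coeff (R := ℝ) n (PowerSeries.derivative ℝ ((egf b) ^ (k + 1))) := by
        rw [PowerSeries.coeff_derivative]; try push_cast; try ring
      have hleib : PowerSeries.derivative ℝ ((egf b) ^ (k + 1)) =
          (k + 1 : ℝ) • ((egf b) ^ k * PowerSeries.derivative ℝ (egf b)) := by
        rw [Derivation.leibniz_pow]
        rw [Nat.add_sub_cancel, ← Nat.cast_smul_eq_nsmul ℝ]
        push_cast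
        rfl
      have hd : ∀ i : ℕ, PowerSeries.coeff (R := ℝ) i (PowerSeries.derivative ℝ (egf b))
          = b (i + 1) / i.factorial := by
        intro i
        rw [PowerSeries.coeff_derivative, coeff_egf]
        have : ((i + 1 : ℕ) : ℝ) ≠ 0 := by positivity
        simp only [Nat.add_eq_zero, one_ne_zero, Nat.add_one_ne_zero, and_false, if_false, Nat.factorial_succ]
        push_cast
        field_simp
      have hkey : PowerSeries.coeff (R := ℝ) n ((egf b) ^ k * PowerSeries.derivative ℝ (egf b))
            * n.factorial
          = (k.factorial : ℝ) * ∑ i ∈ Finset.range (n + 1),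
              (n.choose i : ℝ) * b (i + 1) * partialBell (n - i) k b := by
        rw [mul_comm ((egf b) ^ k), PowerSeries.coeff_mul,
          Finset.Nat.sum_antidiagonal_eq_sum_range_succ_mk, Finset.sum_mul, Finset.mul_sum]
        refine Finset.sum_congr rfl fun i hi => ?_
        rw [Finset.mem_range] at hi
        have hIH := ih (n - i) (by omega) k
        have hfac : ((n - i).factorial : ℝ) ≠ 0 := by positivity
        have hc : PowerSeries.coeff (R := ℝ) (n - i) ((egf b) ^ k)
            = (k.factorial : ℝ) * partialBell (n - i) k b / (n - i).factorial := by
          rw [eq_div_iff hfac]; exact hIH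
        rw [hc, hd i, Nat.cast_choose ℝ (by omega : i ≤ n)]
        have hfi : (i.factorial : ℝ) ≠ 0 := by positivity
        have hfn : ((n - i).factorial : ℝ) ≠ 0 := hfac
        field_simp
      have hsmul : PowerSeries.coeff (R := ℝ) n
            ((k + 1 : ℝ) • ((egf b) ^ k * PowerSeries.derivative ℝ (egf b)))
          = (k + 1 : ℝ) * PowerSeries.coeff (R := ℝ) n ((egf b) ^ k * PowerSeries.derivative ℝ (egf b)) := by
        rw [map_smul, smul_eq_mul]
      calc PowerSeries.coeff (R := ℝ) (n + 1) ((egf b) ^ (k + 1)) * ((n + 1).factorial : ℝ)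
          = (PowerSeries.coeff (R := ℝ) (n + 1) ((egf b) ^ (k + 1)) * ((n : ℝ) + 1)) * n.factorial := by
            rw [Nat.factorial_succ]; push_cast; ring
        _ = PowerSeries.coeff (R := ℝ) n (PowerSeries.derivative ℝ ((egf b) ^ (k + 1))) * n.factorial := by
            rw [hder]
        _ = (k + 1 : ℝ) * (PowerSeries.coeff (R := ℝ) n ((egf b) ^ k * PowerSeries.derivative ℝ (egf b))
              * n.factorial) := by rw [hleib, hsmul]; ring
        _ = (k + 1 : ℝ) * ((k.factorial : ℝ) * ∑ i ∈ Finset.range (n + 1),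
              (n.choose i : ℝ) * b (i + 1) * partialBell (n - i) k b) := by rw [hkey]
        _ = ((k + 1).factorial : ℝ) * partialBell (n + 1) (k + 1) b := by
            rw [partialBell, Nat.factorial_succ]; push_cast; ring

noncomputable def Gd : PowerSeries ℝ := egf dseq

lemma coeff_Gd (n : ℕ) : PowerSeries.coeff (R := ℝ) n Gd = dseq n / n.factorial := by
  rw [Gd, coeff_egf]
  rcases n with _ | n
  · simp [dseq]
  · simp

lemma constantCoeff_Gd : PowerSeries.constantCoeff (R := ℝ) Gd = 0 := by
  rw [← PowerSeries.coeff_zero_eq_constantCoeff_apply, coeff_Gd]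
  simp [dseq]

lemma coeff_two_mul (m : ℕ) (f : PowerSeries ℝ) :
    PowerSeries.coeff (R := ℝ) m (2 * f) = 2 * PowerSeries.coeff (R := ℝ) m f := by
  rw [two_mul, map_add]; ring

lemma keyGd : (1 - 2 * PowerSeries.X) * PowerSeries.derivative ℝ Gd = 1 - Gd := by
  have hexp : (1 - 2 * PowerSeries.X) * PowerSeries.derivative ℝ Gd
      = PowerSeries.derivative ℝ Gd - 2 * (PowerSeries.X * PowerSeries.derivative ℝ Gd) := by
    ring
  rw [hexp]
  ext n
  rcases n with _ | m
  · simp only [map_sub]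
    rw [PowerSeries.coeff_derivative, coeff_Gd, coeff_two_mul]
    simp [dseq, PowerSeries.coeff_zero_eq_constantCoeff, coeff_Gd]
  · simp only [map_sub]
    rw [coeff_two_mul, PowerSeries.coeff_succ_X_mul,
      PowerSeries.coeff_derivative, PowerSeries.coeff_derivative, coeff_Gd, coeff_Gd]
    have hrec : dseq (m + 1 + 1) = (2 * ((m : ℝ) + 1) - 1) * dseq (m + 1) := by
      have := dseq_succ (m + 1) (Nat.le_add_left 1 m)
      push_cast at this
      exact this
    have hone : PowerSeries.coeff (R := ℝ) (m + 1) (1 : PowerSeries ℝ) = 0 := by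
      simp [PowerSeries.coeff_one]
    rw [hrec, hone]
    have h1 : ((m + 1 + 1).factorial : ℝ) = ((m : ℝ) + 1 + 1) * (m + 1).factorial := by
      rw [Nat.factorial_succ]; push_cast; ring
    have h2' : ((m + 1).factorial : ℝ) = ((m : ℝ) + 1) * m.factorial := by
      rw [Nat.factorial_succ]; push_cast; ring
    have hm : (m.factorial : ℝ) ≠ 0 := by positivity
    rw [h1, h2']
    push_cast
    have hm1 : ((m : ℝ) + 1) ≠ 0 := by positivity
    have hm2 : ((m : ℝ) + 1 + 1) ≠ 0 := by positivity
    field_simp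
    ring

lemma sqGd : (1 - Gd) ^ 2 = 1 - 2 * PowerSeries.X := by
  set h : PowerSeries ℝ := (1 - Gd) ^ 2 - (1 - 2 * PowerSeries.X) with hh
  have hsmul2 : ∀ z : PowerSeries ℝ, (2 : ℕ) • z = 2 * z := fun z => by
    rw [two_smul, two_mul]
  have hder1 : PowerSeries.derivative ℝ ((1 - Gd) ^ 2)
      = 2 * ((1 - Gd) * -(PowerSeries.derivative ℝ Gd)) := by
    rw [Derivation.leibniz_pow]
    have hd : PowerSeries.derivative ℝ (1 - Gd) = -(PowerSeries.derivative ℝ Gd) := by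
      rw [map_sub]; simp
    rw [hd, pow_one, hsmul2, smul_eq_mul]
  have hder2 : PowerSeries.derivative ℝ (1 - 2 * PowerSeries.X) = -2 := by
    rw [map_sub, show (2 : PowerSeries ℝ) * PowerSeries.X = PowerSeries.X + PowerSeries.X by ring,
      map_add]
    simp
    ring
  have hrel : (1 - 2 * PowerSeries.X) * PowerSeries.derivative ℝ h = (-2 : PowerSeries ℝ) * h := by
    rw [hh, map_sub, hder1, hder2]
    linear_combination (-2 * (1 - Gd)) * keyGd
  have hzero : ∀ n, PowerSeries.coeff (R := ℝ) n h = 0 := by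
    have hXD : ∀ m : ℕ, PowerSeries.coeff (R := ℝ) m (PowerSeries.X * PowerSeries.derivative ℝ h)
        = PowerSeries.coeff (R := ℝ) m h * m := by
      intro m
      rcases m with _ | m'
      · simp [PowerSeries.coeff_zero_eq_constantCoeff]
      · rw [PowerSeries.coeff_succ_X_mul, PowerSeries.coeff_derivative]
        push_cast; ring
    have hstep : ∀ m : ℕ, PowerSeries.coeff (R := ℝ) (m + 1) h * (m + 1)
        = (2 * m - 2) * PowerSeries.coeff (R := ℝ) m h := by
      intro m
      have hcm := congrArg (PowerSeries.coeff (R := ℝ) m) hrel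
      rw [show (1 - 2 * PowerSeries.X) * PowerSeries.derivative ℝ h
          = PowerSeries.derivative ℝ h - 2 * (PowerSeries.X * PowerSeries.derivative ℝ h) by ring]
        at hcm
      rw [map_sub, coeff_two_mul, hXD, PowerSeries.coeff_derivative,
        show (-2 : PowerSeries ℝ) * h = -(2 * h) by ring, map_neg, coeff_two_mul] at hcm
      push_cast at hcm ⊢
      linarith
    intro n
    induction n with
    | zero =>
      rw [hh, map_sub, PowerSeries.coeff_zero_eq_constantCoeff_apply,
        PowerSeries.coeff_zero_eq_constantCoeff_apply]
      rw [map_pow, map_sub, map_sub, constantCoeff_Gd]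
      simp
    | succ m ihm =>
      have hs := hstep m
      rw [ihm, mul_zero] at hs
      have hm1 : ((m : ℝ) + 1) ≠ 0 := by positivity
      exact (mul_eq_zero.mp hs).resolve_right hm1
  have hz : h = 0 := PowerSeries.ext fun n => by rw [hzero n]; simp
  rw [hh] at hz
  exact sub_eq_zero.mp hz

lemma unitGd : (1 - Gd) * PowerSeries.derivative ℝ Gd = 1 := by
  have hX : (1 - 2 * PowerSeries.X : PowerSeries ℝ) ≠ 0 := by
    intro hcon
    have := congrArg (PowerSeries.coeff (R := ℝ) 0) hcon
    rw [map_sub, coeff_two_mul] at this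
    simp [PowerSeries.coeff_zero_eq_constantCoeff] at this
  apply mul_left_cancel₀ hX
  rw [show (1 - 2 * PowerSeries.X) * ((1 - Gd) * PowerSeries.derivative ℝ Gd)
      = (1 - Gd) * ((1 - 2 * PowerSeries.X) * PowerSeries.derivative ℝ Gd) by ring, keyGd]
  rw [mul_one, ← sq, sqGd]

lemma coeff_sum_pow (n : ℕ) (hn : 1 ≤ n) :
    ∑ k ∈ Finset.Icc 1 n, PowerSeries.coeff (R := ℝ) n (Gd ^ k) = dseq (n + 1) / n.factorial := by
  set P : PowerSeries ℝ := ∑ k ∈ Finset.range (n + 1), Gd ^ k with hP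
  have hgeom : (1 - Gd) * P = 1 - Gd ^ (n + 1) := by
    have := geom_sum_mul Gd (n + 1)
    calc (1 - Gd) * P = -(P * (Gd - 1)) := by rw [hP]; ring
      _ = -(Gd ^ (n + 1) - 1) := by rw [this]
      _ = 1 - Gd ^ (n + 1) := by ring
  have hu : PowerSeries.constantCoeff (R := ℝ) (1 - Gd) ≠ 0 := by
    rw [map_sub, constantCoeff_Gd]
    simp
  have hdiff : PowerSeries.derivative ℝ Gd - P = (1 - Gd)⁻¹ * Gd ^ (n + 1) := by
    have h1 : (1 - Gd) * (PowerSeries.derivative ℝ Gd - P) = Gd ^ (n + 1) := by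
      rw [mul_sub, unitGd, hgeom]; ring
    have := congrArg (fun z => (1 - Gd)⁻¹ * z) h1
    simpa [← mul_assoc, PowerSeries.inv_mul_cancel _ hu] using this
  have hcoeff0 : PowerSeries.coeff (R := ℝ) n ((1 - Gd)⁻¹ * Gd ^ (n + 1)) = 0 := by
    have hdvd : (PowerSeries.X : PowerSeries ℝ) ^ (n + 1) ∣ (1 - Gd)⁻¹ * Gd ^ (n + 1) :=
      Dvd.dvd.mul_left (pow_dvd_pow_of_dvd (PowerSeries.X_dvd_iff.mpr constantCoeff_Gd) _) _
    exact (PowerSeries.X_pow_dvd_iff.mp hdvd) n (Nat.lt_succ_self n)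
  have hPn : PowerSeries.coeff (R := ℝ) n P = PowerSeries.coeff (R := ℝ) n (PowerSeries.derivative ℝ Gd) := by
    have := congrArg (PowerSeries.coeff (R := ℝ) n) hdiff
    rw [map_sub, hcoeff0] at this
    linarith
  have hsplit : Finset.range (n + 1) = insert 0 (Finset.Icc 1 n) := by
    ext j
    simp [Finset.mem_range, Finset.mem_Icc, Finset.mem_insert]
    omega
  have h0notin : (0 : ℕ) ∉ Finset.Icc 1 n := by simp
  have hsum : PowerSeries.coeff (R := ℝ) n P
      = PowerSeries.coeff (R := ℝ) n (Gd ^ 0) + ∑ k ∈ Finset.Icc 1 n, PowerSeries.coeff (R := ℝ) n (Gd ^ k) := by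
    rw [hP, hsplit, Finset.sum_insert h0notin, map_add, map_sum]
  have hone : PowerSeries.coeff (R := ℝ) n (Gd ^ 0) = 0 := by
    rw [pow_zero]
    rcases n with _ | m
    · omega
    · simp [PowerSeries.coeff_one]
  have hd : PowerSeries.coeff (R := ℝ) n (PowerSeries.derivative ℝ Gd) = dseq (n + 1) / n.factorial := by
    rw [PowerSeries.coeff_derivative, coeff_Gd, Nat.factorial_succ]
    have h1 : ((n : ℝ) + 1) ≠ 0 := by positivity
    have h2 : (n.factorial : ℝ) ≠ 0 := by positivity
    push_cast
    field_simp
  rw [← hd, ← hPn, hsum, hone, zero_add]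

lemma bellY_dseq (n : ℕ) (hn : 1 ≤ n) :
    bellY n dseq (fun k => (k.factorial : ℝ)) = dseq (n + 1) := by
  have hfac : (n.factorial : ℝ) ≠ 0 := by positivity
  have : bellY n dseq (fun k => (k.factorial : ℝ))
      = ∑ k ∈ Finset.Icc 1 n, PowerSeries.coeff (R := ℝ) n ((egf dseq) ^ k) * n.factorial := by
    rw [bellY]
    refine Finset.sum_congr rfl fun k hk => ?_
    rw [coeff_egf_pow dseq n k]
    ring
  rw [this, ← Finset.sum_mul]
  have := coeff_sum_pow n hn
  rw [show (egf dseq) = Gd from rfl, this]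
  field_simp

lemma autoA_eq_dseq : ∀ n : ℕ, autoA (fun k => (k.factorial : ℝ)) n = dseq n := by
  intro n
  induction n using Nat.strong_induction_on with
  | _ n ih =>
    match n with
    | 0 => rw [autoA]; simp [dseq]
    | 1 => rw [autoA]; simp [dseq]
    | n + 2 =>
      rw [autoA]
      have hb : bellY (n + 1) (fun k => if _ : k < n + 2 then autoA (fun k => (k.factorial : ℝ)) k
            else 0) (fun k => (k.factorial : ℝ))
          = bellY (n + 1) dseq (fun k => (k.factorial : ℝ)) := by
        rw [bellY, bellY]
        refine Finset.sum_congr rfl fun k hk => ?_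
        congr 1
        apply partialBell_congr
        intro j hj1 hj2
        rw [dif_pos (by omega : j < n + 2)]
        exact ih j (by omega)
      rw [hb, bellY_dseq (n + 1) (Nat.le_add_left 1 n)]

lemma dseq_closed : ∀ n : ℕ, 1 ≤ n →
    dseq n = (-1) ^ (n + 1) * 2 ^ n * genChoose (1 / 2) n * n.factorial := by
  intro n hn
  induction n, hn using Nat.le_induction with
  | base => norm_num [genChoose, dseq]
  | succ m hm ihm =>
    have hrec : dseq (m + 1) = (2 * (m : ℝ) - 1) * dseq m := dseq_succ m hm
    rw [hrec, ihm]
    rw [genChoose, genChoose, Finset.prod_range_succ]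
    have h1 : ((m + 1).factorial : ℝ) = ((m : ℝ) + 1) * m.factorial := by
      rw [Nat.factorial_succ]; push_cast; ring
    have h2 : (m.factorial : ℝ) ≠ 0 := by positivity
    have h3 : ((m : ℝ) + 1) ≠ 0 := by positivity
    rw [h1, pow_succ, pow_succ]
    field_simp
    ring

end Aux

/-- The autonomous operator applied to the sequence `(n!)`:
`A_n = (-1)^{n+1} 2ⁿ C(1/2, n) n!` for `n ≥ 1`. -/
theorem autoA_factorial :
    ∀ n : ℕ, 1 ≤ n →
      autoA (fun k => (k.factorial : ℝ)) n =
        (-1) ^ (n + 1) * 2 ^ n * genChoose (1 / 2) n * n.factorial := by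
  intro n hn
  rw [autoA_eq_dseq n]
  exact dseq_closed n hn
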